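/- Bound on the modified inlier-noise vector: let Q ∈ ℝ^{n×m} have orthonormal columns (QᵀQ = Iₘ), let δ ∈ [0,1] satisfy the principal-angle bound for sparsity level s with δ² < 1/2, let η ∈ ℝⁿ with ‖η‖₂ ≤ ε₀, and let S_k ⊆ {1,…,n} be nonempty with |S_k| ≤ s, so that M_k = I_k − I_{S_k}ᵀQQᵀI_{S_k} is invertible. Then the vector η_k = F_{J∖S_k}(η) + I_{S_k} M_k⁻¹ I_{S_k}ᵀ Q Qᵀ F_{J∖S_k}(η), where J = {1,…,n}, satisfies ‖η_k‖₂² ≤ 3 ε₀². -/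

import Mathlib

open Matrix

/-- Euclidean (ℓ₂) norm of a finitely-indexed real vector. -/
noncomputable def norm2 {ι : Type*} [Fintype ι] (v : ι → ℝ) : ℝ :=
  Real.sqrt (∑ i, v i ^ 2)

/-- A vector of `ℝⁿ` is `s`-sparse if it has at most `s` nonzero entries. -/
def Sparse {n : ℕ} (s : ℕ) (v : Fin n → ℝ) : Prop :=
  ∃ T : Finset (Fin n), T.card ≤ s ∧ ∀ i ∉ T, v i = 0

/-- `δ` satisfies the principal-angle bound for `Q` at sparsity level `s`:
`|⟨Qw, v⟩| ≤ δ ‖Qw‖₂ ‖v‖₂` for every `w` and every `s`-sparse `v`. -/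
def PABound {n m : ℕ} (Q : Matrix (Fin n) (Fin m) ℝ) (s : ℕ) (δ : ℝ) : Prop :=
  ∀ (w : Fin m → ℝ) (v : Fin n → ℝ), Sparse s v →
    |Q.mulVec w ⬝ᵥ v| ≤ δ * norm2 (Q.mulVec w) * norm2 v

/-- The `n × |S|` matrix `I_S` whose columns are the standard basis vectors `e_j`, `j ∈ S`. -/
def colSel {n : ℕ} (S : Finset (Fin n)) : Matrix (Fin n) {i // i ∈ S} ℝ :=
  Matrix.of fun i j => if i = (j : Fin n) then 1 else 0

/-- `F_S(a) = I_S I_Sᵀ a`: the vector agreeing with `a` on `S` and zero elsewhere. -/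
def restrictVec {n : ℕ} (S : Finset (Fin n)) (a : Fin n → ℝ) : Fin n → ℝ :=
  fun i => if i ∈ S then a i else 0

lemma norm2_nonneg' {ι : Type*} [Fintype ι] (v : ι → ℝ) : 0 ≤ norm2 v := Real.sqrt_nonneg _

lemma sq_norm2 {ι : Type*} [Fintype ι] (v : ι → ℝ) : norm2 v ^ 2 = ∑ i, v i ^ 2 :=
  Real.sq_sqrt (Finset.sum_nonneg fun _ _ => sq_nonneg _)

lemma norm2_eq_sqrt_dot {ι : Type*} [Fintype ι] (v : ι → ℝ) :
    norm2 v = Real.sqrt (v ⬝ᵥ v) := by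
  unfold norm2; congr 1; simp [dotProduct, sq]

lemma dot_self_eq_sq_norm2 {ι : Type*} [Fintype ι] (v : ι → ℝ) : v ⬝ᵥ v = norm2 v ^ 2 := by
  rw [sq_norm2]; simp [dotProduct, sq]

lemma dot_le_norm2 {ι : Type*} [Fintype ι] (a b : ι → ℝ) : a ⬝ᵥ b ≤ norm2 a * norm2 b := by
  have h := Finset.sum_mul_sq_le_sq_mul_sq Finset.univ a b
  have h2 : (a ⬝ᵥ b) ^ 2 ≤ (norm2 a * norm2 b) ^ 2 := by
    rw [mul_pow, sq_norm2, sq_norm2]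
    simpa [dotProduct] using h
  have hN : 0 ≤ norm2 a * norm2 b := mul_nonneg (norm2_nonneg' a) (norm2_nonneg' b)
  nlinarith [h2, hN]

lemma mulVec_dot_swap {p q : Type*} [Fintype p] [Fintype q]
    (A : Matrix p q ℝ) (x : q → ℝ) (y : p → ℝ) :
    x ⬝ᵥ Aᵀ.mulVec y = A.mulVec x ⬝ᵥ y := by
  rw [Matrix.dotProduct_mulVec, Matrix.vecMul_transpose]

lemma colSel_mulVec_apply {n : ℕ} (S : Finset (Fin n)) (z : {i // i ∈ S} → ℝ) (i : Fin n) :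
    (colSel S).mulVec z i = if h : i ∈ S then z ⟨i, h⟩ else 0 := by
  simp only [Matrix.mulVec, dotProduct, colSel, Matrix.of_apply]
  split
  · next h =>
    rw [Finset.sum_eq_single (⟨i, h⟩ : {i // i ∈ S})]
    · simp
    · intro b _ hb
      have : i ≠ (b : Fin n) := fun e => hb (Subtype.ext e.symm)
      simp [this]
    · simp
  · next h =>
    apply Finset.sum_eq_zero; intro j _
    have : i ≠ (j : Fin n) := fun e => h (e ▸ j.2)
    simp [this]

lemma colSelT_mulVec_apply {n : ℕ} (S : Finset (Fin n)) (a : Fin n → ℝ) (j : {i // i ∈ S}) :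
    (colSel S)ᵀ.mulVec a j = a j := by
  simp only [Matrix.mulVec, dotProduct, Matrix.transpose_apply, colSel, Matrix.of_apply]
  rw [Finset.sum_eq_single (j : Fin n)] <;> simp +contextual [eq_comm]

lemma sum_sq_colSel {n : ℕ} (S : Finset (Fin n)) (z : {i // i ∈ S} → ℝ) :
    ∑ i, ((colSel S).mulVec z i) ^ 2 = ∑ j, z j ^ 2 := by
  have h1 : ∑ j : {i // i ∈ S}, z j ^ 2
      = ∑ j : {i // i ∈ S}, ((colSel S).mulVec z (j : Fin n)) ^ 2 := by
    refine Finset.sum_congr rfl fun j _ => ?_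
    rw [colSel_mulVec_apply, dif_pos j.2]
  rw [h1, Finset.univ_eq_attach, Finset.sum_attach S (fun i => ((colSel S).mulVec z i) ^ 2)]
  symm
  apply Finset.sum_subset (Finset.subset_univ S)
  intro i _ hi
  rw [colSel_mulVec_apply, dif_neg hi]
  simp

lemma norm2_colSel {n : ℕ} (S : Finset (Fin n)) (z : {i // i ∈ S} → ℝ) :
    norm2 ((colSel S).mulVec z) = norm2 z := by
  unfold norm2; rw [sum_sq_colSel]

lemma sparse_colSel {n s : ℕ} (S : Finset (Fin n)) (hcard : S.card ≤ s)
    (z : {i // i ∈ S} → ℝ) : Sparse s ((colSel S).mulVec z) :=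
  ⟨S, hcard, fun i hi => by rw [colSel_mulVec_apply, dif_neg hi]⟩

lemma norm2_restrict_le {n : ℕ} (S : Finset (Fin n)) (a : Fin n → ℝ) :
    norm2 (restrictVec S a) ≤ norm2 a := by
  apply Real.sqrt_le_sqrt
  apply Finset.sum_le_sum
  intro i _
  unfold restrictVec
  split <;> simp [sq_nonneg]

/-- Bound on the modified inlier-noise vector: if `δ² < 1/2` and `‖η‖₂ ≤ ε₀`, then for any
nonempty `S_k` with `|S_k| ≤ s` the matrix `M_k = I_k − I_{S_k}ᵀ Q Qᵀ I_{S_k}` is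
invertible and `η_k = F_{J∖S_k}(η) + I_{S_k} M_k⁻¹ I_{S_k}ᵀ Q Qᵀ F_{J∖S_k}(η)` satisfies
`‖η_k‖₂² ≤ 3 ε₀²`. -/
theorem stmt16 {n m s : ℕ} (Q : Matrix (Fin n) (Fin m) ℝ) (hQ : Qᵀ * Q = 1)
    (δ : ℝ) (hδ0 : 0 ≤ δ) (hδ1 : δ ≤ 1) (hPA : PABound Q s δ) (hδ2 : δ ^ 2 < 1 / 2)
    (η : Fin n → ℝ) (ε₀ : ℝ) (hη : norm2 η ≤ ε₀)
    (Sk : Finset (Fin n)) (hSkne : Sk.Nonempty) (hcard : Sk.card ≤ s)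
    (Mk : Matrix {i // i ∈ Sk} {i // i ∈ Sk} ℝ)
    (hMk : Mk = 1 - (colSel Sk)ᵀ * Q * Qᵀ * colSel Sk)
    (ηk : Fin n → ℝ)
    (hηk : ηk = restrictVec (Finset.univ \ Sk) η +
      (colSel Sk).mulVec ((Mk⁻¹).mulVec
        ((colSel Sk)ᵀ.mulVec (Q.mulVec (Qᵀ.mulVec (restrictVec (Finset.univ \ Sk) η)))))) :
    IsUnit Mk ∧ norm2 ηk ^ 2 ≤ 3 * ε₀ ^ 2 := by
  -- norm preservation by Q
  have hnormQ : ∀ w : Fin m → ℝ, norm2 (Q.mulVec w) = norm2 w := by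
    intro w
    have hd : Q.mulVec w ⬝ᵥ Q.mulVec w = w ⬝ᵥ w := by
      rw [← mulVec_dot_swap Q w (Q.mulVec w), Matrix.mulVec_mulVec, hQ, Matrix.one_mulVec]
    rw [norm2_eq_sqrt_dot, norm2_eq_sqrt_dot, hd]
  -- for sparse y, ‖Qᵀ y‖ ≤ δ ‖y‖
  have hQt : ∀ y : Fin n → ℝ, Sparse s y → norm2 (Qᵀ.mulVec y) ≤ δ * norm2 y := by
    intro y hy
    have h1 : Q.mulVec (Qᵀ.mulVec y) ⬝ᵥ y = norm2 (Qᵀ.mulVec y) ^ 2 := by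
      rw [← mulVec_dot_swap Q (Qᵀ.mulVec y) y, dot_self_eq_sq_norm2]
    have h2 := hPA (Qᵀ.mulVec y) y hy
    rw [h1, hnormQ (Qᵀ.mulVec y)] at h2
    have h3 : norm2 (Qᵀ.mulVec y) ^ 2 ≤ δ * norm2 (Qᵀ.mulVec y) * norm2 y :=
      le_trans (le_abs_self _) h2
    rcases eq_or_lt_of_le (norm2_nonneg' (Qᵀ.mulVec y)) with h0 | h0
    · rw [← h0]; exact mul_nonneg hδ0 (norm2_nonneg' y)
    · nlinarith [h3, h0]
  -- ‖Qᵀ f‖ ≤ ‖f‖ for any f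
  have hQtle : ∀ f : Fin n → ℝ, norm2 (Qᵀ.mulVec f) ≤ norm2 f := by
    intro f
    have h1 : (Qᵀ.mulVec f) ⬝ᵥ (Qᵀ.mulVec f) = Q.mulVec (Qᵀ.mulVec f) ⬝ᵥ f :=
      mulVec_dot_swap Q (Qᵀ.mulVec f) f
    have h2 := dot_le_norm2 (Q.mulVec (Qᵀ.mulVec f)) f
    rw [hnormQ] at h2
    have h3 : norm2 (Qᵀ.mulVec f) ^ 2 ≤ norm2 (Qᵀ.mulVec f) * norm2 f := by
      rw [← dot_self_eq_sq_norm2, h1]; exact h2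
    rcases eq_or_lt_of_le (norm2_nonneg' (Qᵀ.mulVec f)) with h0 | h0
    · rw [← h0]; exact norm2_nonneg' f
    · nlinarith [h3, h0]
  -- quadratic form lower bound
  have hquad : ∀ x : {i // i ∈ Sk} → ℝ,
      (1 - δ ^ 2) * norm2 x ^ 2 ≤ x ⬝ᵥ Mk.mulVec x := by
    intro x
    have hBx : ((colSel Sk)ᵀ * Q * Qᵀ * colSel Sk).mulVec x
        = (colSel Sk)ᵀ.mulVec (Q.mulVec (Qᵀ.mulVec ((colSel Sk).mulVec x))) := by
      simp [Matrix.mulVec_mulVec, Matrix.mul_assoc]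
    have hdotB : x ⬝ᵥ ((colSel Sk)ᵀ * Q * Qᵀ * colSel Sk).mulVec x
        = norm2 (Qᵀ.mulVec ((colSel Sk).mulVec x)) ^ 2 := by
      rw [hBx, mulVec_dot_swap (colSel Sk) x _, dotProduct_comm,
        ← mulVec_dot_swap Q (Qᵀ.mulVec ((colSel Sk).mulVec x)) ((colSel Sk).mulVec x),
        dot_self_eq_sq_norm2]
    have hnQty : norm2 (Qᵀ.mulVec ((colSel Sk).mulVec x)) ≤ δ * norm2 x := by
      have h := hQt ((colSel Sk).mulVec x) (sparse_colSel Sk hcard x)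
      rwa [norm2_colSel] at h
    have hMx : x ⬝ᵥ Mk.mulVec x
        = norm2 x ^ 2 - norm2 (Qᵀ.mulVec ((colSel Sk).mulVec x)) ^ 2 := by
      rw [hMk, Matrix.sub_mulVec, Matrix.one_mulVec, dotProduct_sub,
        dot_self_eq_sq_norm2, hdotB]
    rw [hMx]
    nlinarith [hnQty, norm2_nonneg' x, norm2_nonneg' (Qᵀ.mulVec ((colSel Sk).mulVec x)), hδ0,
      mul_nonneg hδ0 (norm2_nonneg' x)]
  -- Mk is positive definite
  have hherm : Mk.IsHermitian := by
    rw [hMk]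
    unfold Matrix.IsHermitian
    rw [Matrix.conjTranspose_eq_transpose_of_trivial, Matrix.transpose_sub,
      Matrix.transpose_one]
    congr 1
    rw [Matrix.transpose_mul, Matrix.transpose_mul, Matrix.transpose_mul,
      Matrix.transpose_transpose, Matrix.transpose_transpose]
    simp [Matrix.mul_assoc]
  have hpd : Mk.PosDef := by
    refine Matrix.PosDef.of_dotProduct_mulVec_pos hherm fun x hx => ?_
    have hxpos : 0 < norm2 x ^ 2 := by
      rw [sq_norm2]
      obtain ⟨i, hi⟩ := Function.ne_iff.mp hx
      exact Finset.sum_pos' (fun j _ => sq_nonneg _)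
        ⟨i, Finset.mem_univ i, sq_pos_of_ne_zero hi⟩
    have h1 := hquad x
    have h2 : (0:ℝ) < (1 - δ ^ 2) * norm2 x ^ 2 := by nlinarith [hδ2, hxpos]
    calc (0:ℝ) < (1 - δ ^ 2) * norm2 x ^ 2 := h2
      _ ≤ x ⬝ᵥ Mk.mulVec x := h1
      _ = star x ⬝ᵥ Mk.mulVec x := by rw [star_trivial]
  have hUnit : IsUnit Mk := hpd.isUnit
  refine ⟨hUnit, ?_⟩
  have hdet : IsUnit Mk.det := (Matrix.isUnit_iff_isUnit_det Mk).mp hUnit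
  have hMinv : Mk * Mk⁻¹ = 1 := Matrix.mul_nonsing_inv Mk hdet
  set f : Fin n → ℝ := restrictVec (Finset.univ \ Sk) η with hf_def
  set u : {i // i ∈ Sk} → ℝ := (colSel Sk)ᵀ.mulVec (Q.mulVec (Qᵀ.mulVec f)) with hu_def
  set z : {i // i ∈ Sk} → ℝ := Mk⁻¹.mulVec u with hz_def
  have hMz : Mk.mulVec z = u := by
    rw [hz_def, Matrix.mulVec_mulVec, hMinv, Matrix.one_mulVec]
  -- ‖u‖ ≤ δ‖f‖
  have hu : norm2 u ≤ δ * norm2 f := by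
    have e1 : u ⬝ᵥ ((colSel Sk)ᵀ.mulVec (Q.mulVec (Qᵀ.mulVec f)))
        = Q.mulVec (Qᵀ.mulVec f) ⬝ᵥ ((colSel Sk).mulVec u) := by
      rw [mulVec_dot_swap (colSel Sk) u _, dotProduct_comm]
    rw [← hu_def] at e1
    have e2 := hPA (Qᵀ.mulVec f) ((colSel Sk).mulVec u) (sparse_colSel Sk hcard u)
    rw [norm2_colSel, hnormQ] at e2
    have e3 : norm2 u ^ 2 ≤ δ * norm2 (Qᵀ.mulVec f) * norm2 u := by
      rw [← dot_self_eq_sq_norm2, e1]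
      exact le_trans (le_abs_self _) e2
    have e4 : δ * norm2 (Qᵀ.mulVec f) * norm2 u ≤ δ * norm2 f * norm2 u :=
      mul_le_mul_of_nonneg_right (mul_le_mul_of_nonneg_left (hQtle f) hδ0) (norm2_nonneg' u)
    rcases eq_or_lt_of_le (norm2_nonneg' u) with h0 | h0
    · rw [← h0]; exact mul_nonneg hδ0 (norm2_nonneg' f)
    · nlinarith [e3, e4, h0]
  -- ‖z‖ ≤ 2‖u‖
  have hz : norm2 z ≤ 2 * norm2 u := by
    have h1 := hquad z
    rw [hMz] at h1
    have h3 : z ⬝ᵥ u ≤ norm2 z * norm2 u := dot_le_norm2 z u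
    rcases eq_or_lt_of_le (norm2_nonneg' z) with h0 | h0
    · rw [← h0]; exact mul_nonneg (by norm_num) (norm2_nonneg' u)
    · nlinarith [h1, h3, h0, hδ2, norm2_nonneg' u]
  have hf : norm2 f ≤ ε₀ := le_trans (norm2_restrict_le _ η) hη
  have hε0 : (0:ℝ) ≤ ε₀ := le_trans (norm2_nonneg' η) hη
  -- split of the squared norm
  have hsplit : norm2 ηk ^ 2 = norm2 f ^ 2 + norm2 z ^ 2 := by
    rw [sq_norm2, sq_norm2, sq_norm2, ← sum_sq_colSel Sk z, ← Finset.sum_add_distrib]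
    refine Finset.sum_congr rfl fun i _ => ?_
    rw [hηk, Pi.add_apply]
    by_cases hi : i ∈ Sk
    · have hf0 : f i = 0 := by
        rw [hf_def]; unfold restrictVec
        simp [hi]
      rw [hf0]; ring
    · have hc0 : (colSel Sk).mulVec z i = 0 := by
        rw [colSel_mulVec_apply, dif_neg hi]
      rw [hc0]; ring
  rw [hsplit]
  have h1 : norm2 z ≤ 2 * δ * norm2 f := by
    calc norm2 z ≤ 2 * norm2 u := hz
      _ ≤ 2 * (δ * norm2 f) := by linarith [hu]
      _ = 2 * δ * norm2 f := by ring
  have h2 : norm2 z ^ 2 ≤ 4 * δ ^ 2 * norm2 f ^ 2 := by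
    nlinarith [norm2_nonneg' z, h1, mul_nonneg (mul_nonneg (by norm_num : (0:ℝ) ≤ 2) hδ0)
      (norm2_nonneg' f)]
  have h3 : norm2 f ^ 2 ≤ ε₀ ^ 2 := by nlinarith [norm2_nonneg' f, hf, hε0]
  nlinarith [h2, h3, hδ2, sq_nonneg (norm2 f)]
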